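/- Distance bound from the Reg(t) set to the complementarity set: equip ℝ^q × ℝ^q with the Euclidean norm. If t ≥ 0 and (x1, x2) ∈ R(t), then the distance from (x1, x2) to the complementarity set C (the infimum of Euclidean distances to points of C) is at most √(q·t). In particular, feasible points of the regularized problem Reg(t) lie within O(√t) of the MPCC feasible complementarity set as t → 0. -/

import Mathlib

/-- Distance bound from the Reg(t) set to the complementarity set, in the Euclidean
norm on ℝ^q × ℝ^q ≅ ℝ^{2q}: points of R(t) are within √(q·t) of C. -/
theorem stmt_9 (q : ℕ) (hq : 0 < q) (t : ℝ) (ht : 0 ≤ t)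
    (x : EuclideanSpace ℝ (Fin q ⊕ Fin q))
    (h1 : ∀ j, 0 ≤ x (Sum.inl j)) (h2 : ∀ j, 0 ≤ x (Sum.inr j))
    (hprod : ∀ j, x (Sum.inl j) * x (Sum.inr j) ≤ t) :
    Metric.infDist x
      {y : EuclideanSpace ℝ (Fin q ⊕ Fin q) |
        ∀ j, 0 ≤ y (Sum.inl j) ∧ 0 ≤ y (Sum.inr j) ∧
          y (Sum.inl j) * y (Sum.inr j) = 0}
      ≤ Real.sqrt ((q : ℝ) * t) := by
  set y : EuclideanSpace ℝ (Fin q ⊕ Fin q) :=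
    WithLp.toLp 2 (fun i => match i with
      | Sum.inl j => if x (Sum.inl j) ≤ x (Sum.inr j) then 0 else x (Sum.inl j)
      | Sum.inr j => if x (Sum.inl j) ≤ x (Sum.inr j) then x (Sum.inr j) else 0) with hy
  have hyl : ∀ j, y (Sum.inl j)
      = if x (Sum.inl j) ≤ x (Sum.inr j) then 0 else x (Sum.inl j) := fun j => rfl
  have hyr : ∀ j, y (Sum.inr j)
      = if x (Sum.inl j) ≤ x (Sum.inr j) then x (Sum.inr j) else 0 := fun j => rfl
  have hmem : y ∈ {y : EuclideanSpace ℝ (Fin q ⊕ Fin q) |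
      ∀ j, 0 ≤ y (Sum.inl j) ∧ 0 ≤ y (Sum.inr j) ∧
        y (Sum.inl j) * y (Sum.inr j) = 0} := by
    intro j
    rw [hyl, hyr]
    by_cases h : x (Sum.inl j) ≤ x (Sum.inr j) <;> simp [h, h1 j, h2 j]
  refine le_trans (Metric.infDist_le_dist_of_mem hmem) ?_
  rw [EuclideanSpace.dist_eq]
  apply Real.sqrt_le_sqrt
  rw [Fintype.sum_sum_type]
  simp only [Real.dist_eq, sq_abs]
  have hbound : ∀ j : Fin q,
      (x (Sum.inl j) - y (Sum.inl j)) ^ 2 + (x (Sum.inr j) - y (Sum.inr j)) ^ 2 ≤ t := by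
    intro j
    rw [hyl, hyr]
    by_cases h : x (Sum.inl j) ≤ x (Sum.inr j)
    · simp only [h, if_true, sub_zero, sub_self]
      calc x (Sum.inl j) ^ 2 + 0 ^ 2 = x (Sum.inl j) * x (Sum.inl j) := by ring
        _ ≤ x (Sum.inl j) * x (Sum.inr j) := by
            exact mul_le_mul_of_nonneg_left h (h1 j)
        _ ≤ t := hprod j
    · simp only [h, if_false, sub_zero, sub_self]
      calc 0 ^ 2 + x (Sum.inr j) ^ 2 = x (Sum.inr j) * x (Sum.inr j) := by ring
        _ ≤ x (Sum.inl j) * x (Sum.inr j) := by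
            exact mul_le_mul_of_nonneg_right (le_of_not_ge h) (h2 j)
        _ ≤ t := hprod j
  calc (∑ j : Fin q, (x (Sum.inl j) - y (Sum.inl j)) ^ 2)
        + ∑ j : Fin q, (x (Sum.inr j) - y (Sum.inr j)) ^ 2
      = ∑ j : Fin q, ((x (Sum.inl j) - y (Sum.inl j)) ^ 2
          + (x (Sum.inr j) - y (Sum.inr j)) ^ 2) := by
        rw [Finset.sum_add_distrib]
    _ ≤ ∑ _j : Fin q, t := Finset.sum_le_sum (fun j _ => hbound j)
    _ = (q : ℝ) * t := by simp [mul_comm]
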